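/- Let V be a finite-dimensional real inner product space and {Z_λ : λ ∈ Λ} a family of subspaces of V. Then the intersection over λ of the subalgebras C(Z_λ) of the Clifford algebra C(V) equals C(⋂_λ Z_λ), the subalgebra generated by the intersection of the subspaces. -/

import Mathlib

open CliffordAlgebra InnerProductSpace

section Aux

variable {V : Type*} [NormedAddCommGroup V] [InnerProductSpace ℝ V]
variable (Q : QuadraticForm ℝ V)

/-- The Clifford algebra is generated by `ι '' univ`. -/
lemma aux_adjoin_univ : Algebra.adjoin ℝ (ι Q '' (Set.univ : Set V)) = ⊤ := by
  rw [eq_top_iff]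
  intro x hx
  clear hx
  induction x using CliffordAlgebra.induction with
  | algebraMap r => exact Subalgebra.algebraMap_mem _ r
  | ι v => exact Algebra.subset_adjoin ⟨v, trivial, rfl⟩
  | mul a b ha hb => exact mul_mem ha hb
  | add a b ha hb => exact add_mem ha hb

/-- `involute` preserves the subalgebra generated by `ι '' Z`. -/
lemma aux_involute_mem {Z : Set V} {x : CliffordAlgebra Q}
    (hx : x ∈ Algebra.adjoin ℝ (ι Q '' Z)) :
    involute x ∈ Algebra.adjoin ℝ (ι Q '' Z) := by
  induction hx using Algebra.adjoin_induction with
  | mem y hy =>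
      obtain ⟨z, hz, rfl⟩ := hy
      rw [involute_ι]
      exact neg_mem (Algebra.subset_adjoin ⟨z, hz, rfl⟩)
  | algebraMap r => rw [AlgHom.commutes]; exact Subalgebra.algebraMap_mem _ r
  | add a b _ _ ha hb => rw [map_add]; exact add_mem ha hb
  | mul a b _ _ ha hb => rw [map_mul]; exact mul_mem ha hb

/-- Orthogonal vectors anticommute in the Clifford algebra. -/
lemma aux_anticomm (hQ : ∀ v : V, Q v = ⟪v, v⟫_ℝ) {u v : V} (h : ⟪u, v⟫_ℝ = 0) :
    ι Q u * ι Q v = -(ι Q v * ι Q u) := by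
  have hpolar : QuadraticMap.polar Q u v = 0 := by
    simp only [QuadraticMap.polar, hQ, real_inner_add_add_self]
    rw [h]; ring
  have := ι_mul_ι_add_swap (Q := Q) u v
  rw [hpolar, map_zero] at this
  exact eq_neg_of_add_eq_zero_left this

/-- Twisted commutation: a vector orthogonal to `Z` twisted-commutes with `C(Z)`. -/
lemma aux_comm (hQ : ∀ v : V, Q v = ⟪v, v⟫_ℝ) {Z : Set V} {u : V} (hu : ∀ z ∈ Z, ⟪u, z⟫_ℝ = 0)
    {x : CliffordAlgebra Q} (hx : x ∈ Algebra.adjoin ℝ (ι Q '' Z)) :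
    ι Q u * x = involute x * ι Q u := by
  induction hx using Algebra.adjoin_induction with
  | mem y hy =>
      obtain ⟨z, hz, rfl⟩ := hy
      rw [involute_ι, aux_anticomm Q hQ (hu z hz), neg_mul]
  | algebraMap r =>
      rw [AlgHom.commutes, Algebra.commutes]
  | add a b _ _ ha hb => rw [mul_add, ha, hb, map_add, add_mul]
  | mul a b _ _ ha hb =>
      rw [← mul_assoc, ha, mul_assoc, hb, ← mul_assoc, map_mul]

lemma aux_comm' (hQ : ∀ v : V, Q v = ⟪v, v⟫_ℝ) {Z : Set V} {u : V} (hu : ∀ z ∈ Z, ⟪u, z⟫_ℝ = 0)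
    {x : CliffordAlgebra Q} (hx : x ∈ Algebra.adjoin ℝ (ι Q '' Z)) :
    ι Q u * involute x = x * ι Q u := by
  have := aux_comm Q hQ hu (aux_involute_mem Q hx)
  rwa [involute_involute] at this

/-- Core step: if `x ∈ C(W)`, `u ∈ W` is a unit vector and `x` twisted-commutes
with `u`, then `x ∈ C(W ⊓ uᗮ)`. -/
lemma aux_step (hQ : ∀ v : V, Q v = ⟪v, v⟫_ℝ) (W : Submodule ℝ V) {u : V} (huW : u ∈ W) (hu1 : ⟪u, u⟫_ℝ = 1)
    {x : CliffordAlgebra Q}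
    (hxW : x ∈ Algebra.adjoin ℝ (ι Q '' (W : Set V)))
    (hcomm : ι Q u * involute x = x * ι Q u) :
    x ∈ Algebra.adjoin ℝ (ι Q '' ((W ⊓ (ℝ ∙ u)ᗮ : Submodule ℝ V) : Set V)) := by
  set A := Algebra.adjoin ℝ (ι Q '' ((W ⊓ (ℝ ∙ u)ᗮ : Submodule ℝ V) : Set V)) with hA
  have hperp : ∀ z ∈ ((W ⊓ (ℝ ∙ u)ᗮ : Submodule ℝ V) : Set V), ⟪u, z⟫_ℝ = 0 := by
    intro z hz
    exact Submodule.mem_orthogonal_singleton_iff_inner_right.mp (Submodule.mem_inf.mp hz).2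
  have hQu : Q u = 1 := by rw [hQ]; exact hu1
  have hsq : ι Q u * ι Q u = 1 := by
    rw [ι_sq_scalar, hQu, map_one]
  -- decomposition of C(W) as A + A * ι u
  have hdec : ∀ y ∈ Algebra.adjoin ℝ (ι Q '' (W : Set V)),
      ∃ a ∈ A, ∃ b ∈ A, y = a + b * ι Q u := by
    intro y hy
    induction hy using Algebra.adjoin_induction with
    | mem y hy =>
        obtain ⟨w, hw, rfl⟩ := hy
        refine ⟨ι Q (w - ⟪u, w⟫_ℝ • u), ?_, algebraMap ℝ _ ⟪u, w⟫_ℝ,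
          Subalgebra.algebraMap_mem _ _, ?_⟩
        · refine Algebra.subset_adjoin ⟨w - ⟪u, w⟫_ℝ • u, ?_, rfl⟩
          refine ⟨Submodule.sub_mem _ hw (Submodule.smul_mem _ _ huW), ?_⟩
          rw [SetLike.mem_coe, Submodule.mem_orthogonal_singleton_iff_inner_right, inner_sub_right,
            real_inner_smul_right, hu1]
          ring
        · rw [map_sub, map_smul, Algebra.smul_def]
          abel
    | algebraMap r =>
        exact ⟨algebraMap ℝ _ r, Subalgebra.algebraMap_mem _ _, 0,
          zero_mem _, by rw [zero_mul, add_zero]⟩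
    | add y z _ _ hy hz =>
        obtain ⟨a, ha, b, hb, rfl⟩ := hy
        obtain ⟨c, hc, d, hd, rfl⟩ := hz
        exact ⟨a + c, add_mem ha hc, b + d, add_mem hb hd, by noncomm_ring⟩
    | mul y z _ _ hy hz =>
        obtain ⟨a, ha, b, hb, rfl⟩ := hy
        obtain ⟨c, hc, d, hd, rfl⟩ := hz
        have hc' : ι Q u * c = involute c * ι Q u := aux_comm Q hQ hperp hc
        have hd' : ι Q u * d = involute d * ι Q u := aux_comm Q hQ hperp hd
        refine ⟨a * c + b * involute d, add_mem (mul_mem ha hc)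
          (mul_mem hb (aux_involute_mem Q hd)),
          a * d + b * involute c, add_mem (mul_mem ha hd)
          (mul_mem hb (aux_involute_mem Q hc)), ?_⟩
        have : (a + b * ι Q u) * (c + d * ι Q u) =
            a * c + a * d * ι Q u + b * (ι Q u * c) + b * (ι Q u * d) * ι Q u := by
          noncomm_ring
        rw [this, hc', hd']
        rw [show b * (involute d * ι Q u) * ι Q u = b * involute d * (ι Q u * ι Q u) by
          noncomm_ring, hsq, mul_one]
        noncomm_ring
  obtain ⟨a, ha, b, hb, rfl⟩ := hdec x hxW
  -- use the commutation relation to show b = 0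
  have ha' : ι Q u * involute a = a * ι Q u := aux_comm' Q hQ hperp ha
  have hb' : ι Q u * involute b = b * ι Q u := aux_comm' Q hQ hperp hb
  have hL : ι Q u * involute (a + b * ι Q u) = a * ι Q u - b := by
    rw [map_add, map_mul, involute_ι, mul_add, ha', mul_neg, mul_neg, ← mul_assoc, hb',
      mul_assoc, hsq, mul_one, ← sub_eq_add_neg]
  have hR : (a + b * ι Q u) * ι Q u = a * ι Q u + b := by
    rw [add_mul, mul_assoc, hsq, mul_one]
  rw [hL, hR] at hcomm
  have hbb : a * ι Q u + (b + b) = a * ι Q u + 0 := by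
    rw [add_zero, ← add_assoc]
    exact (sub_eq_iff_eq_add.mp hcomm).symm
  have hb2 : b + b = 0 := add_left_cancel hbb
  have hb0 : b = 0 := by
    have h2 : (2 : ℝ) • b = 0 := by rw [two_smul]; exact hb2
    calc b = (2⁻¹ : ℝ) • ((2 : ℝ) • b) := by rw [smul_smul]; norm_num
    _ = 0 := by rw [h2, smul_zero]
  rw [hb0, zero_mul, add_zero]
  exact ha

/-- Backward direction of twisted duality: if `x` twisted-commutes with every vector of
`Zᗮ`, then `x ∈ C(Z)`. -/
lemma aux_backward [FiniteDimensional ℝ V] (hQ : ∀ v : V, Q v = ⟪v, v⟫_ℝ)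
    (Z : Submodule ℝ V) {x : CliffordAlgebra Q}
    (hx : ∀ u ∈ Zᗮ, ι Q u * involute x = x * ι Q u) :
    x ∈ Algebra.adjoin ℝ (ι Q '' (Z : Set V)) := by
  classical
  let b := stdOrthonormalBasis ℝ ↥(Zᗮ)
  set m := Module.finrank ℝ ↥(Zᗮ) with hm
  let f : Fin m → V := fun i => (b i : V)
  have hf_mem : ∀ i, f i ∈ Zᗮ := fun i => (b i).2
  have hf : ∀ i j, ⟪f i, f j⟫_ℝ = if i = j then 1 else 0 := by
    intro i j
    have h := orthonormal_iff_ite.mp b.orthonormal i j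
    rwa [Submodule.coe_inner] at h
  have hspan : Submodule.span ℝ (Set.range f) = Zᗮ := by
    have h1 : Set.range f = (Zᗮ).subtype '' Set.range ⇑b := by
      rw [← Set.range_comp]; rfl
    have hb : Submodule.span ℝ (Set.range ⇑b) = ⊤ := by
      rw [← b.coe_toBasis]; exact b.toBasis.span_eq
    rw [h1, Submodule.span_image, hb, Submodule.map_subtype_top]
  have key : ∀ k : ℕ, k ≤ m → x ∈ Algebra.adjoin ℝ
      (ι Q '' (((Submodule.span ℝ (f '' {i : Fin m | (i : ℕ) < k}))ᗮ : Submodule ℝ V) : Set V)) := by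
    intro k
    induction k with
    | zero =>
        intro _
        have h0 : {i : Fin m | (i : ℕ) < 0} = ∅ := by ext i; simp
        rw [h0, Set.image_empty, Submodule.span_empty, Submodule.bot_orthogonal_eq_top,
          Submodule.top_coe, aux_adjoin_univ]
        exact Algebra.mem_top
    | succ k ih =>
        intro hk1
        have hk : k < m := hk1
        have ihx := ih (le_of_lt hk)
        set u := f ⟨k, hk⟩ with hu_def
        have hu1 : ⟪u, u⟫_ℝ = 1 := by simpa using hf ⟨k, hk⟩ ⟨k, hk⟩
        have huW : u ∈ (Submodule.span ℝ (f '' {i : Fin m | (i : ℕ) < k}))ᗮ := by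
          rw [Submodule.mem_orthogonal]
          intro v hv
          induction hv using Submodule.span_induction with
          | mem v hv =>
              obtain ⟨i, hi, rfl⟩ := hv
              have hne : i ≠ ⟨k, hk⟩ := by
                intro h
                rw [h] at hi
                exact absurd hi (lt_irrefl k)
              simpa [hne] using hf i ⟨k, hk⟩
          | zero => simp
          | add v w _ _ hv hw => rw [inner_add_left, hv, hw, add_zero]
          | smul c v _ hv => rw [real_inner_smul_left, hv, mul_zero]
        have hcomm := hx u (hf_mem ⟨k, hk⟩)
        have hstep := aux_step Q hQ _ huW hu1 ihx hcomm
        have hset : f '' {i : Fin m | (i : ℕ) < k + 1} = f '' {i : Fin m | (i : ℕ) < k} ∪ {u} := by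
          ext v
          simp only [Set.mem_image, Set.mem_union, Set.mem_singleton_iff, Set.mem_setOf_eq]
          constructor
          · rintro ⟨i, hi, rfl⟩
            rcases Nat.lt_succ_iff_lt_or_eq.mp hi with h | h
            · exact Or.inl ⟨i, h, rfl⟩
            · exact Or.inr (by rw [show i = ⟨k, hk⟩ from Fin.ext h])
          · rintro (⟨i, hi, rfl⟩ | rfl)
            · exact ⟨i, Nat.lt_succ_of_lt hi, rfl⟩
            · exact ⟨⟨k, hk⟩, Nat.lt_succ_self k, rfl⟩
        have hWeq : (Submodule.span ℝ (f '' {i : Fin m | (i : ℕ) < k}))ᗮ ⊓ (ℝ ∙ u)ᗮ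
            = (Submodule.span ℝ (f '' {i : Fin m | (i : ℕ) < k + 1}))ᗮ := by
          rw [Submodule.inf_orthogonal, hset, Submodule.span_union]
        rwa [hWeq] at hstep
  have hfin := key m le_rfl
  have hall : {i : Fin m | (i : ℕ) < m} = Set.univ := by ext i; simp [i.isLt]
  rwa [hall, Set.image_univ, hspan, Submodule.orthogonal_orthogonal] at hfin

end Aux

theorem stmt14 {V : Type*} [NormedAddCommGroup V] [InnerProductSpace ℝ V]
    [FiniteDimensional ℝ V] (Q : QuadraticForm ℝ V) (hQ : ∀ v : V, Q v = ⟪v, v⟫_ℝ)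
    {Λ : Type*} (Z : Λ → Submodule ℝ V) :
    (⋂ l : Λ, (Algebra.adjoin ℝ (ι Q '' (Z l : Set V)) : Set (CliffordAlgebra Q))) =
      (Algebra.adjoin ℝ (ι Q '' ((⨅ l : Λ, Z l : Submodule ℝ V) : Set V)) : Set (CliffordAlgebra Q)) := by
  apply Set.eq_of_subset_of_subset
  · intro x hx
    rw [Set.mem_iInter] at hx
    rw [SetLike.mem_coe]
    have hx' : ∀ l, x ∈ Algebra.adjoin ℝ (ι Q '' (Z l : Set V)) := fun l => hx l
    let U : Submodule ℝ V :=
      { carrier := {u : V | ι Q u * involute x = x * ι Q u}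
        add_mem' := by
          intro a b ha hb
          simp only [Set.mem_setOf_eq] at ha hb ⊢
          rw [map_add, add_mul, mul_add, ha, hb]
        zero_mem' := by simp only [Set.mem_setOf_eq, map_zero, zero_mul, mul_zero]
        smul_mem' := by
          intro c a ha
          simp only [Set.mem_setOf_eq] at ha ⊢
          rw [map_smul, smul_mul_assoc, mul_smul_comm, ha] }
    have hle : ∀ l, (Z l)ᗮ ≤ U := by
      intro l u hu
      have hu' : ∀ z ∈ (Z l : Set V), ⟪u, z⟫_ℝ = 0 := by
        intro z hz
        rw [real_inner_comm]
        exact (Submodule.mem_orthogonal (Z l) u).mp hu z hz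
      exact aux_comm' Q hQ hu' (hx' l)
    have hsup : (⨅ l, Z l)ᗮ ≤ U := by
      have h1 : (⨅ l, Z l) = (⨆ l, (Z l)ᗮ)ᗮ := by
        calc (⨅ l, Z l) = ⨅ l, ((Z l)ᗮ)ᗮ := by
              simp only [Submodule.orthogonal_orthogonal]
        _ = (⨆ l, (Z l)ᗮ)ᗮ := Submodule.iInf_orthogonal _
      rw [h1, Submodule.orthogonal_orthogonal]
      exact iSup_le hle
    exact aux_backward Q hQ _ (fun u hu => hsup hu)
  · refine Set.subset_iInter fun l => ?_
    intro x hx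
    rw [SetLike.mem_coe] at hx ⊢
    exact Algebra.adjoin_mono
      (Set.image_mono (SetLike.coe_subset_coe.mpr (iInf_le Z l))) hx
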